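/- There do not exist Lebesgue-measurable probability densities p_Θ : ℝ → [0,∞) and p_Y : ℝ → [0,∞) (each nonnegative with total Lebesgue integral 1) such that for all θ, y ∈ ℝ: p_Θ(θ) · N(y; θ/2, 1/(1+θ²)) = p_Y(y) · N(θ; y/2, 1/(1+y²)). That is, the Gaussian conditional families f(y|θ) = N(y; θ/2, 1/(1+θ²)) and q(θ|y) = N(θ; y/2, 1/(1+y²)) are incompatible: no joint probability distribution on ℝ² has them as its conditional densities. -/

import Mathlib

open MeasureTheory

/-- The one-dimensional Gaussian density `N(x; m, v)` with variance `v`. -/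
noncomputable def gauss1 (m v x : ℝ) : ℝ :=
  (2 * Real.pi * v) ^ (-(1 : ℝ) / 2) * Real.exp (-(x - m) ^ 2 / (2 * v))

lemma gauss1_pos (m v x : ℝ) (hv : 0 < v) : 0 < gauss1 m v x := by
  unfold gauss1
  have h : (0:ℝ) < 2 * Real.pi * v := by positivity
  exact mul_pos (Real.rpow_pos_of_pos h _) (Real.exp_pos _)

lemma gauss_key (θ : ℝ) (hθ : 3 ≤ θ) :
    gauss1 (θ / 2) (1 / (1 + θ ^ 2)) 0 ≤ gauss1 (0 / 2) (1 / (1 + (0:ℝ) ^ 2)) θ := by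
  have hs : (0:ℝ) < 1 + θ ^ 2 := by positivity
  have hpi : (0:ℝ) < 2 * Real.pi := by positivity
  unfold gauss1
  have h1 : (2 * Real.pi * (1 / (1 + θ ^ 2))) ^ (-(1:ℝ) / 2)
      = (2 * Real.pi) ^ (-(1:ℝ) / 2) * Real.sqrt (1 + θ ^ 2) := by
    rw [mul_one_div, Real.div_rpow hpi.le hs.le, neg_div, Real.rpow_neg hs.le,
      div_inv_eq_mul, ← Real.sqrt_eq_rpow]
  have h2 : -(0 - θ / 2) ^ 2 / (2 * (1 / (1 + θ ^ 2))) = -(θ ^ 2 * (1 + θ ^ 2)) / 8 := by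
    field_simp
    ring
  have h3 : -(θ - 0 / 2) ^ 2 / (2 * (1 / (1 + (0:ℝ) ^ 2))) = -θ ^ 2 / 2 := by
    norm_num
  have h4 : (2 * Real.pi * (1 / (1 + (0:ℝ) ^ 2))) = 2 * Real.pi := by norm_num
  rw [h1, h2, h3, h4]
  -- reduce to: sqrt(1+θ²) * exp(-(θ²(1+θ²))/8) ≤ exp(-θ²/2)
  have hsqrt : Real.sqrt (1 + θ ^ 2) ≤ Real.exp (θ ^ 2 * (θ ^ 2 - 3) / 8) := by
    have e1 : (1:ℝ) + θ ^ 2 ≤ Real.exp (3 * θ ^ 2 / 2) := by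
      have := Real.add_one_le_exp (3 * θ ^ 2 / 2)
      nlinarith
    calc Real.sqrt (1 + θ ^ 2) ≤ Real.sqrt (Real.exp (3 * θ ^ 2 / 2)) :=
          Real.sqrt_le_sqrt e1
      _ = Real.exp (3 * θ ^ 2 / 4) := by
          rw [show (3 * θ ^ 2 / 2) = 3 * θ ^ 2 / 4 + 3 * θ ^ 2 / 4 by ring,
            Real.exp_add, ← sq, Real.sqrt_sq (Real.exp_pos _).le]
      _ ≤ Real.exp (θ ^ 2 * (θ ^ 2 - 3) / 8) := by
          apply Real.exp_le_exp.mpr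
          have h9 : (9:ℝ) ≤ θ ^ 2 := by nlinarith
          nlinarith [sq_nonneg θ]
  calc (2 * Real.pi) ^ (-(1:ℝ) / 2) * Real.sqrt (1 + θ ^ 2)
        * Real.exp (-(θ ^ 2 * (1 + θ ^ 2)) / 8)
      ≤ (2 * Real.pi) ^ (-(1:ℝ) / 2) * Real.exp (θ ^ 2 * (θ ^ 2 - 3) / 8)
        * Real.exp (-(θ ^ 2 * (1 + θ ^ 2)) / 8) := by
        apply mul_le_mul_of_nonneg_right _ (Real.exp_pos _).le
        exact mul_le_mul_of_nonneg_left hsqrt (Real.rpow_pos_of_pos hpi _).le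
    _ = (2 * Real.pi) ^ (-(1:ℝ) / 2) * Real.exp (-θ ^ 2 / 2) := by
        rw [mul_assoc, ← Real.exp_add]
        congr 2
        ring

/-- The Gaussian conditional families `f(y|θ) = N(y; θ/2, 1/(1+θ²))` and
`q(θ|y) = N(θ; y/2, 1/(1+y²))` are incompatible: no joint probability distribution on
`ℝ²` has them as its conditional densities. -/
theorem incompatible_gaussian_conditionals :
    ¬ ∃ (pΘ pY : ℝ → ℝ),
      Measurable pΘ ∧ Measurable pY ∧
      (∀ θ, 0 ≤ pΘ θ) ∧ (∀ y, 0 ≤ pY y) ∧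
      (∫ θ : ℝ, pΘ θ) = 1 ∧ (∫ y : ℝ, pY y) = 1 ∧
      ∀ θ y : ℝ,
        pΘ θ * gauss1 (θ / 2) (1 / (1 + θ ^ 2)) y =
          pY y * gauss1 (y / 2) (1 / (1 + y ^ 2)) θ := by
  rintro ⟨pΘ, pY, hmΘ, -, hΘ0, hY0, hIΘ, -, heq⟩
  have hG1 : ∀ θ : ℝ, 0 < gauss1 (θ / 2) (1 / (1 + θ ^ 2)) 0 := fun θ =>
    gauss1_pos _ _ _ (by positivity)
  rcases (hY0 0).eq_or_lt with hc0 | hc0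
  · -- pY 0 = 0 forces pΘ ≡ 0
    have hp : ∀ θ, pΘ θ = 0 := by
      intro θ
      have h := heq θ 0
      rw [← hc0, zero_mul] at h
      exact (mul_eq_zero.mp h).resolve_right (hG1 θ).ne'
    rw [show pΘ = fun _ => (0:ℝ) from funext hp] at hIΘ
    simp at hIΘ
  · -- pY 0 > 0 forces pΘ non-integrable
    have hlb : ∀ θ ∈ Set.Ici (3:ℝ), pY 0 ≤ pΘ θ := by
      intro θ hθ
      have h := heq θ 0
      have hg := gauss_key θ hθ
      have hpos := hG1 θ
      nlinarith [mul_le_mul_of_nonneg_left hg hc0.le]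
    have hnint : ¬ Integrable pΘ := by
      intro hint
      have h1 : IntegrableOn pΘ (Set.Ici (3:ℝ)) := hint.integrableOn
      have h2 : IntegrableOn (fun _ => pY 0) (Set.Ici (3:ℝ)) := by
        apply Integrable.mono' h1 aestronglyMeasurable_const
        filter_upwards [ae_restrict_mem measurableSet_Ici] with x hx
        rw [Real.norm_eq_abs, abs_of_pos hc0]
        exact hlb x hx
      rw [integrableOn_const_iff] at h2
      rcases h2 with h | h
      · exact hc0.ne' (enorm_eq_zero.mp h)
      · simp [Real.volume_Ici] at h
    rw [integral_undef hnint] at hIΘ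
    exact zero_ne_one hIΘ
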